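/- Let r ≥ 2 be an integer, let η > 0 be real, and let F be a graph with chromatic number χ(F) = r + 1. There exists n₀ such that every F-free graph G on n ≥ n₀ vertices can be made K_{r+1}-free by removing at most η·n² edges. -/

import Mathlib

open SimpleGraph

universe u v

/-- `G` contains a copy of `F` as a (not necessarily induced) subgraph. -/
def ContainsCopy {α : Type u} {β : Type v} (F : SimpleGraph α) (G : SimpleGraph β) : Prop :=
  ∃ f : α → β, Function.Injective f ∧ ∀ ⦃a b⦄, F.Adj a b → G.Adj (f a) (f b)

/-- The number of `s`-cliques of `G`. -/
noncomputable def cliqueCount {V : Type u} (G : SimpleGraph V) (s : ℕ) : ℕ :=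
  Set.ncard {S : Finset V | G.IsNClique s S}

/-- `G` has exactly `m` edges. -/
def HasEdgeCount {V : Type u} (G : SimpleGraph V) (m : ℕ) : Prop :=
  G.edgeSet.Finite ∧ G.edgeSet.ncard = m

/-- `mex_{K_s}(m, F)`: the maximum number of `s`-cliques in an `F`-free graph with `m` edges
(no restriction on the number of vertices). -/
noncomputable def mexCliques {α : Type u} (s m : ℕ) (F : SimpleGraph α) : ℕ :=
  sSup {k : ℕ | ∃ G : SimpleGraph ℕ, ¬ ContainsCopy F G ∧ HasEdgeCount G m ∧ cliqueCount G s = k}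

/-- The `t`-fold blowup of `K_r`: the complete `r`-partite graph with all parts of size `t`. -/
def blowup (r t : ℕ) : SimpleGraph (Fin r × Fin t) where
  Adj p q := p.1 ≠ q.1
  symm := ⟨fun _ _ h => h.symm⟩
  loopless := ⟨fun _ h => h rfl⟩

/-- Any two distinct elements of `A` are incongruent mod `r`. -/
def IsRainbow (r : ℕ) (A : Finset ℕ) : Prop :=
  ∀ i ∈ A, ∀ j ∈ A, i ≠ j → i % r ≠ j % r

/-- The set consisting of the first `N` `k`-element sets in the `r`-partite colex order. -/
def rpartiteColexInitial (r k N : ℕ) : Set (Finset ℕ) :=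
  {A | A.card = k ∧ IsRainbow r A ∧
    Set.ncard {B | B.card = k ∧ IsRainbow r B ∧
      toColex B ≤ toColex A} ≤ N}

/-- The colex Turán graph `CT_r(m)`: the graph on `ℕ` whose edges are the first `m`
two-element sets in the `r`-partite colex order. -/
def colexTuran (r m : ℕ) : SimpleGraph ℕ where
  Adj a b := a ≠ b ∧ ({a, b} : Finset ℕ) ∈ rpartiteColexInitial r 2 m
  symm := by
    constructor
    intro a b h
    refine ⟨h.1.symm, ?_⟩
    rw [Finset.pair_comm]
    exact h.2
  loopless := ⟨fun a h => h.1 rfl⟩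

/-- `t_r(n)`: the number of edges of the Turán graph `T_r(n)`. -/
noncomputable def turanEdges (r n : ℕ) : ℕ := (turanGraph n r).edgeSet.ncard

/-- `β_r = (2(r-1)/r)^{1/2}`. -/
noncomputable def betaR (r : ℕ) : ℝ := Real.sqrt (2 * ((r : ℝ) - 1) / r)

/-- `c_{r,s} = C(r,s) / C(r,2)^{s/2}`. -/
noncomputable def cRS (r s : ℕ) : ℝ := (r.choose s : ℝ) / ((r.choose 2 : ℝ) ^ ((s : ℝ) / 2))

/-- `ex_{K_t}(n, F)`: the maximum number of `t`-cliques in an `F`-free graph on `n` vertices. -/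
noncomputable def exCliques {α : Type u} (t n : ℕ) (F : SimpleGraph α) : ℕ :=
  sSup {k : ℕ | ∃ G : SimpleGraph (Fin n), ¬ ContainsCopy F G ∧ cliqueCount G t = k}

/-- `ex(n, F)`: the maximum number of edges in an `F`-free graph on `n` vertices. -/
noncomputable def exEdges {α : Type u} (n : ℕ) (F : SimpleGraph α) : ℕ :=
  sSup {k : ℕ | ∃ G : SimpleGraph (Fin n), ¬ ContainsCopy F G ∧ G.edgeSet.ncard = k}

/-- The shadow of the family `F` at level `p`. -/
def shadowP (p : ℕ) (F : Set (Finset ℕ)) : Set (Finset ℕ) :=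
  {B | B.card = p ∧ ∃ A ∈ F, B ⊆ A}


open Finset SimpleGraph

namespace EFRAux

variable {V : Type*} [DecidableEq V] {G : SimpleGraph V} [DecidableRel G.Adj]

lemma card_interedges_eq_sum (G : SimpleGraph V) [DecidableRel G.Adj] (s t : Finset V) :
    #(G.interedges s t) = ∑ v ∈ s, #({y ∈ t | G.Adj v y}) := by
  classical
  rw [SimpleGraph.interedges, Rel.interedges_eq_biUnion, card_biUnion]
  · simp
  · intro x hx y hy hxy
    simp only [Finset.disjoint_left, mem_map, Function.Embedding.coeFn_mk]
    rintro a ⟨b, hb, rfl⟩ ⟨c, hc, hca⟩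
    exact hxy (congrArg Prod.fst hca).symm

lemma edgeDensity_cast (G : SimpleGraph V) [DecidableRel G.Adj] (s t : Finset V) :
    (G.edgeDensity s t : ℝ) = #(G.interedges s t) / (#s * #t) := by
  rw [SimpleGraph.edgeDensity_def]
  push_cast
  ring

/-- Selection step: in a system of pairs `(L, f i)` which are all `ε`-uniform and dense,
one can select `s` vertices of `L` with a large common neighbourhood in each `f i`. -/
lemma select {m t : ℕ} {δ ε : ℝ} {f : Fin m → Finset V} {L : Finset V}
    (hδ0 : 0 < δ) (hδ1 : δ ≤ 1) (hε0 : 0 < ε)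
    (hεγ : ε ≤ (δ / 2) ^ t) (hεδ : ε ≤ δ / 2)
    (hεm : (m : ℝ) * ε ≤ 1 / 2) (hL : 2 * t < #L)
    (hfne : ∀ i, 0 < #(f i))
    (hunif : ∀ i, G.IsUniform ε L (f i))
    (hdens : ∀ i, δ ≤ (G.edgeDensity L (f i) : ℝ)) :
    ∀ s, s ≤ t → ∃ (S : Finset V) (C : Fin m → Finset V),
      S ⊆ L ∧ #S = s ∧ (∀ i, C i ⊆ f i) ∧
      (∀ i, (δ / 2) ^ s * #(f i) ≤ (#(C i) : ℝ)) ∧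
      (∀ v ∈ S, ∀ i, ∀ y ∈ C i, G.Adj v y) := by
  have hδ2 : (0:ℝ) < δ / 2 := by linarith
  have hδ2le : δ / 2 ≤ 1 := by linarith
  intro s
  induction s with
  | zero =>
    exact fun _ => ⟨∅, f, empty_subset _, card_empty, fun _ => Finset.Subset.rfl,
      fun i => by simp, by simp⟩
  | succ s ih =>
    intro hst
    obtain ⟨S, C, hSL, hScard, hCsub, hCcard, hadj⟩ := ih (Nat.le_of_succ_le hst)
    have hεs : ε ≤ (δ / 2) ^ s := by
      refine hεγ.trans (pow_le_pow_of_le_one hδ2.le hδ2le (Nat.le_of_succ_le hst))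
    have hCfcard : ∀ i, (#(f i) : ℝ) * ε ≤ #(C i) := by
      intro i
      calc (#(f i) : ℝ) * ε ≤ (δ / 2) ^ s * #(f i) := by
            rw [mul_comm]
            exact mul_le_mul_of_nonneg_right hεs (Nat.cast_nonneg _)
        _ ≤ _ := hCcard i
    have hCpos : ∀ i, (0:ℝ) < #(C i) := by
      intro i
      refine lt_of_lt_of_le ?_ (hCcard i)
      have := hfne i
      positivity
    set Bad : Fin m → Finset V := fun i =>
      {v ∈ L | (#({y ∈ C i | G.Adj v y}) : ℝ) < δ / 2 * #(C i)} with hBad_def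
    have hBadcard : ∀ i, (#(Bad i) : ℝ) < #L * ε := by
      intro i
      by_contra hcon
      push_neg at hcon
      have hBadL : Bad i ⊆ L := filter_subset _ _
      have huni := hunif i hBadL (hCsub i) hcon (hCfcard i)
      have hLpos : (0:ℝ) < #L := by
        have : 0 < #L := lt_of_le_of_lt (Nat.zero_le _) hL
        exact_mod_cast this
      have hBadpos : (0:ℝ) < #(Bad i) := lt_of_lt_of_le (by positivity) hcon
      have hBadne : (Bad i).Nonempty := card_pos.mp (by exact_mod_cast hBadpos)
      have hd1 : δ - ε < (G.edgeDensity (Bad i) (C i) : ℝ) := by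
        have h1 := (abs_sub_lt_iff.mp huni).2
        have h2 := hdens i
        linarith
      have hsum : (#(G.interedges (Bad i) (C i)) : ℝ) < #(Bad i) * (δ / 2 * #(C i)) := by
        rw [card_interedges_eq_sum]
        push_cast
        calc (∑ v ∈ Bad i, (#({y ∈ C i | G.Adj v y}) : ℝ))
            < ∑ _v ∈ Bad i, δ / 2 * #(C i) := by
              refine Finset.sum_lt_sum_of_nonempty hBadne ?_
              intro v hv
              exact (mem_filter.mp hv).2
          _ = #(Bad i) * (δ / 2 * #(C i)) := by
              rw [Finset.sum_const, nsmul_eq_mul]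
      have hd2 : (G.edgeDensity (Bad i) (C i) : ℝ) < δ / 2 := by
        rw [edgeDensity_cast]
        rw [div_lt_iff₀ (mul_pos hBadpos (hCpos i))]
        calc (#(G.interedges (Bad i) (C i)) : ℝ) < #(Bad i) * (δ / 2 * #(C i)) := hsum
          _ = δ / 2 * (#(Bad i) * #(C i)) := by ring
      linarith
    have hcount : (#(S ∪ univ.biUnion Bad) : ℝ) < #L := by
      have h1 : (#(S ∪ univ.biUnion Bad) : ℝ) ≤ #S + #(univ.biUnion Bad) := by
        exact_mod_cast card_union_le _ _
      have h2 : (#(univ.biUnion Bad) : ℝ) ≤ ∑ i : Fin m, (#(Bad i) : ℝ) := by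
        exact_mod_cast card_biUnion_le
      have h3 : ∑ i : Fin m, (#(Bad i) : ℝ) ≤ (m : ℝ) * (#L * ε) := by
        calc ∑ i : Fin m, (#(Bad i) : ℝ) ≤ ∑ _i : Fin m, (#L * ε : ℝ) :=
              Finset.sum_le_sum fun i _ => (hBadcard i).le
          _ = (m : ℝ) * (#L * ε) := by
              rw [Finset.sum_const, card_univ, Fintype.card_fin, nsmul_eq_mul]
      have h4 : (m : ℝ) * (#L * ε) ≤ 1 / 2 * #L := by
        have : (m : ℝ) * ε * #L ≤ 1 / 2 * #L :=
          mul_le_mul_of_nonneg_right hεm (Nat.cast_nonneg _)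
        nlinarith [Nat.cast_nonneg (α := ℝ) #L]
      have h5 : (s : ℝ) + 1 / 2 * #L < #L := by
        have ht' : ((2 * t : ℕ) : ℝ) < #L := by exact_mod_cast hL
        have hst' : (s : ℝ) ≤ t := by
          have : s ≤ t := Nat.le_of_succ_le hst
          exact_mod_cast this
        push_cast at ht'
        linarith
      rw [hScard] at *
      calc (#(S ∪ univ.biUnion Bad) : ℝ) ≤ s + (m : ℝ) * (#L * ε) := by
            rw [← hScard]; push_cast [hScard]; linarith
        _ ≤ s + 1 / 2 * #L := by linarith
        _ < #L := h5
    have hnsub : ¬ L ⊆ S ∪ univ.biUnion Bad := by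
      intro hsub
      have := card_le_card hsub
      have : (#L : ℝ) ≤ #(S ∪ univ.biUnion Bad) := by exact_mod_cast this
      linarith
    obtain ⟨v, hvL, hvn⟩ := Finset.not_subset.mp hnsub
    have hvS : v ∉ S := fun h => hvn (mem_union_left _ h)
    have hvB : ∀ i, v ∉ Bad i := fun i h =>
      hvn (mem_union_right _ (mem_biUnion.mpr ⟨i, mem_univ i, h⟩))
    have hvgood : ∀ i, δ / 2 * #(C i) ≤ (#({y ∈ C i | G.Adj v y}) : ℝ) := by
      intro i
      have h := hvB i
      rw [hBad_def, mem_filter, not_and] at h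
      exact le_of_not_gt (h hvL)
    refine ⟨insert v S, fun i => {y ∈ C i | G.Adj v y},
      insert_subset_iff.mpr ⟨hvL, hSL⟩,
      by rw [card_insert_of_notMem hvS, hScard],
      fun i => (filter_subset _ _).trans (hCsub i), ?_, ?_⟩
    · intro i
      calc (δ / 2) ^ (s + 1) * #(f i) = δ / 2 * ((δ / 2) ^ s * #(f i)) := by ring
        _ ≤ δ / 2 * #(C i) := mul_le_mul_of_nonneg_left (hCcard i) hδ2.le
        _ ≤ _ := hvgood i
    · intro u hu i y hy
      rcases mem_insert.mp hu with rfl | huS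
      · exact (mem_filter.mp hy).2
      · exact hadj u huS i y (mem_filter.mp hy).1


/-- Embedding lemma: a system of `m` pairwise `ε`-uniform dense sets contains a transversal
blowup of the complete graph with `t` vertices per part. -/
lemma emb (m t : ℕ) : ∀ (δ : ℝ), 0 < δ → δ ≤ 1 →
    ∃ ε : ℝ, 0 < ε ∧ ∃ N : ℕ,
      ∀ {V : Type*} [DecidableEq V] (G : SimpleGraph V) [DecidableRel G.Adj]
        (f : Fin m → Finset V), (∀ i, N ≤ #(f i)) →
        (∀ i j, i ≠ j → G.IsUniform ε (f i) (f j)) →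
        (∀ i j, i ≠ j → δ ≤ (G.edgeDensity (f i) (f j) : ℝ)) →
        ∃ T : Fin m → Finset V, (∀ i, T i ⊆ f i) ∧ (∀ i, #(T i) = t) ∧
          (∀ i j, i ≠ j → ∀ x ∈ T i, ∀ y ∈ T j, G.Adj x y) := by
  induction m with
  | zero =>
    refine fun δ _ _ => ⟨1, one_pos, 0, ?_⟩
    intro V _ G _ f _ _ _
    exact ⟨fun i => i.elim0, fun i => i.elim0, fun i => i.elim0, fun i => i.elim0⟩
  | succ m IH =>
    intro δ hδ0 hδ1
    obtain ⟨ε', hε'0, N', hIH⟩ := IH (δ / 2) (by linarith) (by linarith)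
    set γ : ℝ := (δ / 2) ^ t with hγ_def
    have hδ2 : (0:ℝ) < δ / 2 := by linarith
    have hγ0 : 0 < γ := by positivity
    have hγ1 : γ ≤ 1 := pow_le_one₀ hδ2.le (by linarith)
    set ε : ℝ := min (min (ε' * γ / 2) (min γ (δ / 2))) (1 / (2 * (m + 1))) with hε_def
    have hε0 : 0 < ε := by
      refine lt_min (lt_min (by positivity) (lt_min hγ0 hδ2)) (by positivity)
    have hεε' : ε ≤ ε' * γ / 2 := (min_le_left _ _).trans (min_le_left _ _)
    have hεγ : ε ≤ γ := (min_le_left _ _).trans ((min_le_right _ _).trans (min_le_left _ _))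
    have hεδ : ε ≤ δ / 2 := (min_le_left _ _).trans ((min_le_right _ _).trans (min_le_right _ _))
    have hεm : (m : ℝ) * ε ≤ 1 / 2 := by
      have h1 : ε ≤ 1 / (2 * (m + 1)) := min_le_right _ _
      have h2 : (0:ℝ) < 2 * ((m:ℝ) + 1) := by positivity
      have h3 : (m : ℝ) * (1 / (2 * (m + 1))) ≤ 1 / 2 := by
        rw [mul_one_div, div_le_div_iff₀ h2 two_pos]
        nlinarith [Nat.cast_nonneg (α := ℝ) m]
      calc (m : ℝ) * ε ≤ (m : ℝ) * (1 / (2 * (m + 1))) :=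
            mul_le_mul_of_nonneg_left h1 (Nat.cast_nonneg _)
        _ ≤ 1 / 2 := h3
    refine ⟨ε, hε0, max (2 * t + 1) ⌈(N' : ℝ) / γ⌉₊, ?_⟩
    intro V _ G _ f hsize hunif hdens
    have hsize1 : ∀ i, 2 * t + 1 ≤ #(f i) := fun i => (le_max_left _ _).trans (hsize i)
    have hfne : ∀ i : Fin m, 0 < #(f (Fin.succ i)) := fun i =>
      lt_of_lt_of_le (Nat.succ_pos _) (hsize1 _)
    have hne0 : ∀ i : Fin m, (0 : Fin (m+1)) ≠ Fin.succ i := fun i => (Fin.succ_ne_zero i).symm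
    obtain ⟨S, C, hSL, hScard, hCsub, hCcard, hadjS⟩ :=
      select (G := G) (f := fun i : Fin m => f (Fin.succ i)) (L := f 0)
        hδ0 hδ1 hε0 hεγ hεδ hεm
        (by have := hsize1 0; omega)
        hfne
        (fun i => hunif 0 (Fin.succ i) (hne0 i))
        (fun i => hdens 0 (Fin.succ i) (hne0 i)) t le_rfl
    -- the sets `C i` are large
    have hγf : ∀ i : Fin m, γ * #(f (Fin.succ i)) ≤ (#(C i) : ℝ) := fun i => hCcard i
    have hCsize : ∀ i : Fin m, N' ≤ #(C i) := by
      intro i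
      have h1 : ((N' : ℝ)) ≤ γ * #(f (Fin.succ i)) := by
        have h2 : (⌈(N' : ℝ) / γ⌉₊ : ℝ) ≤ #(f (Fin.succ i)) := by
          exact_mod_cast (le_max_right _ _).trans (hsize _)
        have h3 : (N' : ℝ) / γ ≤ #(f (Fin.succ i)) := (Nat.le_ceil _).trans h2
        rw [div_le_iff₀ hγ0] at h3
        linarith [h3]
      have := h1.trans (hγf i)
      exact_mod_cast this
    -- uniformity of the pairs (C i, C j)
    have hCunif : ∀ i j : Fin m, i ≠ j → G.IsUniform ε' (C i) (C j) := by
      intro i j hij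
      have hij' : Fin.succ i ≠ Fin.succ j := fun h => hij (Fin.succ_injective _ h)
      have hu := hunif (Fin.succ i) (Fin.succ j) hij'
      intro A hA B hB hAc hBc
      have hA' : A ⊆ f (Fin.succ i) := hA.trans (hCsub i)
      have hB' : B ⊆ f (Fin.succ j) := hB.trans (hCsub j)
      have key : ∀ (k : Fin m) (D : Finset V), D ⊆ C k → (#(C k) : ℝ) * ε' ≤ #D →
          (#(f (Fin.succ k)) : ℝ) * ε ≤ #D := by
        intro k D _ hD
        have h0 : (0:ℝ) ≤ (#(f (Fin.succ k)) : ℝ) := Nat.cast_nonneg _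
        have h1 : (#(f (Fin.succ k)) : ℝ) * ε ≤ (#(f (Fin.succ k)) : ℝ) * (ε' * γ / 2) :=
          mul_le_mul_of_nonneg_left hεε' h0
        have h2 : (#(f (Fin.succ k)) : ℝ) * (ε' * γ / 2) ≤ γ * (#(f (Fin.succ k)) : ℝ) * ε' := by
          nlinarith [mul_nonneg (mul_nonneg hε'0.le hγ0.le) h0]
        have h3 : γ * (#(f (Fin.succ k)) : ℝ) * ε' ≤ (#(C k) : ℝ) * ε' :=
          mul_le_mul_of_nonneg_right (hγf k) hε'0.le
        linarith
      have keyC : ∀ k : Fin m, (#(f (Fin.succ k)) : ℝ) * ε ≤ #(C k) := by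
        intro k
        calc (#(f (Fin.succ k)) : ℝ) * ε ≤ (#(f (Fin.succ k)) : ℝ) * γ :=
              mul_le_mul_of_nonneg_left hεγ (Nat.cast_nonneg _)
          _ = γ * #(f (Fin.succ k)) := mul_comm _ _
          _ ≤ _ := hγf k
      have hd1 := hu hA' hB' (key i A hA hAc) (key j B hB hBc)
      have hd2 := hu (hCsub i) (hCsub j) (keyC i) (keyC j)
      have htri := abs_sub_le ((G.edgeDensity A B : ℝ))
        ((G.edgeDensity (f (Fin.succ i)) (f (Fin.succ j)) : ℝ))
        ((G.edgeDensity (C i) (C j) : ℝ))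
      have habs : |(G.edgeDensity (f (Fin.succ i)) (f (Fin.succ j)) : ℝ) -
          (G.edgeDensity (C i) (C j) : ℝ)| = |(G.edgeDensity (C i) (C j) : ℝ) -
          (G.edgeDensity (f (Fin.succ i)) (f (Fin.succ j)) : ℝ)| := abs_sub_comm _ _
      rw [habs] at htri
      have hfin : ε + ε ≤ ε' := by
        have h5 : ε' * γ ≤ ε' * 1 := mul_le_mul_of_nonneg_left hγ1 hε'0.le
        rw [mul_one] at h5
        linarith
      calc |(G.edgeDensity A B : ℝ) - (G.edgeDensity (C i) (C j) : ℝ)| ≤ _ := htri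
        _ < ε + ε := add_lt_add hd1 hd2
        _ ≤ ε' := hfin
    -- density of the pairs (C i, C j)
    have hCdens : ∀ i j : Fin m, i ≠ j → δ / 2 ≤ (G.edgeDensity (C i) (C j) : ℝ) := by
      intro i j hij
      have hij' : Fin.succ i ≠ Fin.succ j := fun h => hij (Fin.succ_injective _ h)
      have hu := hunif (Fin.succ i) (Fin.succ j) hij'
      have keyC : ∀ k : Fin m, (#(f (Fin.succ k)) : ℝ) * ε ≤ #(C k) := by
        intro k
        calc (#(f (Fin.succ k)) : ℝ) * ε ≤ (#(f (Fin.succ k)) : ℝ) * γ :=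
              mul_le_mul_of_nonneg_left hεγ (Nat.cast_nonneg _)
          _ = γ * #(f (Fin.succ k)) := mul_comm _ _
          _ ≤ _ := hγf k
      have hd2 := hu (hCsub i) (hCsub j) (keyC i) (keyC j)
      have h1 := (abs_sub_lt_iff.mp hd2).2
      have h2 := hdens (Fin.succ i) (Fin.succ j) hij'
      linarith
    obtain ⟨T', hT'sub, hT'card, hT'adj⟩ := hIH G C hCsize hCunif hCdens
    refine ⟨Fin.cons S T', ?_, ?_, ?_⟩
    · intro i
      obtain rfl | ⟨i', rfl⟩ := i.eq_zero_or_eq_succ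
      · simpa using hSL
      · simpa using (hT'sub i').trans (hCsub i')
    · intro i
      obtain rfl | ⟨i', rfl⟩ := i.eq_zero_or_eq_succ
      · simpa using hScard
      · simpa using hT'card i'
    · intro i j hij x hx y hy
      obtain rfl | ⟨i', rfl⟩ := i.eq_zero_or_eq_succ <;>
        obtain rfl | ⟨j', rfl⟩ := j.eq_zero_or_eq_succ
      · exact absurd rfl hij
      · simp only [Fin.cons_zero, Fin.cons_succ] at hx hy
        exact hadjS x hx j' y (hT'sub j' hy)
      · simp only [Fin.cons_zero, Fin.cons_succ] at hx hy
        exact (hadjS y hy i' x (hT'sub i' hx)).symm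
      · simp only [Fin.cons_succ] at hx hy
        exact hT'adj i' j' (fun h => hij (congrArg Fin.succ h)) x hx y hy

open Finpartition in
lemma unreduced_subset {V : Type*} [DecidableEq V] [Fintype V] (G : SimpleGraph V)
    [DecidableRel G.Adj] (P : Finpartition (univ : Finset V)) (ε δ : ℝ) :
    ((univ : Finset (V × V)).filter fun xy : V × V =>
        G.Adj xy.1 xy.2 ∧ ¬ (G.regularityReduced P ε δ).Adj xy.1 xy.2) ⊆
      ((P.nonUniforms G ε).biUnion fun UV : Finset V × Finset V => UV.1 ×ˢ UV.2) ∪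
        P.parts.biUnion Finset.offDiag ∪
        ((P.sparsePairs G δ).biUnion fun UV : Finset V × Finset V =>
          G.interedges UV.1 UV.2) := by
  rintro ⟨x, y⟩ hxy
  simp only [mem_filter, mem_univ, true_and] at hxy
  obtain ⟨hadj, hnadj⟩ := hxy
  obtain ⟨U, hU, hxU⟩ := P.exists_mem (mem_univ x)
  obtain ⟨W, hW, hyW⟩ := P.exists_mem (mem_univ y)
  rcases eq_or_ne U W with rfl | hUW
  · refine mem_union_left _ (mem_union_right _ ?_)
    exact mem_biUnion.mpr ⟨U, hU, mem_offDiag.mpr ⟨hxU, hyW, hadj.ne⟩⟩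
  by_cases hunif : G.IsUniform ε U W
  · have hsparse : (G.edgeDensity U W : ℝ) < δ := by
      by_contra hd
      push_neg at hd
      exact hnadj ⟨hadj, U, hU, W, hW, hxU, hyW, hUW, hunif, hd⟩
    refine mem_union_right _ (mem_biUnion.mpr ⟨(U, W), ?_, ?_⟩)
    · exact (P.mk_mem_sparsePairs G U W δ).mpr ⟨hU, hW, hUW, hsparse⟩
    · exact (SimpleGraph.mk_mem_interedges_iff G).mpr ⟨hxU, hyW, hadj⟩
  · refine mem_union_left _ (mem_union_left _ ?_)
    exact mem_biUnion.mpr ⟨(U, W), (P.mk_mem_nonUniforms G).mpr ⟨hU, hW, hUW, hunif⟩,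
      mem_product.mpr ⟨hxU, hyW⟩⟩

end EFRAux


/-- **Erdős–Frankl–Rödl removal consequence** (Theorem 2.6): for `r ≥ 2`, `η > 0`, and `F`
with `χ(F) = r + 1`, there is `n₀` such that every `F`-free graph on `n ≥ n₀` vertices can be
made `K_{r+1}`-free by removing at most `η n²` edges. -/
theorem erdos_frankl_rodl (r : ℕ) (hr : 2 ≤ r) (η : ℝ) (hη : 0 < η)
    {α : Type u} [Fintype α] (F : SimpleGraph α)
    (hχ : F.chromaticNumber = (r + 1 : ℕ)) :
    ∃ n₀ : ℕ, ∀ (V : Type v) [Fintype V], ∀ G : SimpleGraph V, n₀ ≤ Fintype.card V →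
      ¬ ContainsCopy F G →
      ∃ G' ≤ G, ((G.edgeSet \ G'.edgeSet).ncard : ℝ) ≤ η * (Fintype.card V : ℝ) ^ 2 ∧
        ¬ ContainsCopy (completeGraph (Fin (r + 1))) G' := by

  classical
  have hcol : F.Colorable (r + 1) := by
    rw [← SimpleGraph.chromaticNumber_le_iff_colorable, hχ]
  obtain ⟨Co⟩ := hcol
  set t := Fintype.card α with ht_def
  set η' : ℝ := min η 1 with hη'_def
  have hη'0 : 0 < η' := lt_min hη one_pos
  have hη'1 : η' ≤ 1 := min_le_right _ _
  have hη'η : η' ≤ η := min_le_left _ _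
  set δ : ℝ := η' / 16 with hδ_def
  have hδ0 : 0 < δ := by positivity
  have hδ1 : δ ≤ 1 := by rw [hδ_def]; linarith
  obtain ⟨εe, hεe0, Ne, hemb⟩ := EFRAux.emb (r + 1) t δ hδ0 hδ1
  set εr : ℝ := min (η' / 16) εe with hεr_def
  have hεr0 : 0 < εr := lt_min (by positivity) hεe0
  set l : ℕ := max ⌈(4:ℝ) / δ⌉₊ 1 with hl_def
  set B : ℕ := SzemerediRegularity.bound εr l with hB_def
  refine ⟨max l (max 1 ((Ne + 1) * (B + 1))), ?_⟩
  intro V _ G hn hF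
  letI : DecidableEq V := Classical.decEq V
  letI : DecidableRel G.Adj := Classical.decRel _
  have hl_le : l ≤ Fintype.card V := le_trans (le_max_left _ _) hn
  have hV1 : 1 ≤ Fintype.card V :=
    le_trans (le_trans (le_max_left 1 _) (le_max_right l _)) hn
  haveI : Nonempty V := Fintype.card_pos_iff.mp hV1
  obtain ⟨P, hP₁, hP₂, hP₃, hP₄⟩ := szemeredi_regularity G hεr0 hl_le
  have hG'le : G.regularityReduced P εr δ ≤ G := SimpleGraph.regularityReduced_le
  have hparts_pos : 0 < #P.parts :=
    lt_of_lt_of_le (lt_of_lt_of_le Nat.zero_lt_one (le_max_right _ 1)) hP₂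
  have hpartsize : ∀ U ∈ P.parts, Ne ≤ #U := by
    intro U hU
    have h1 := hP₁.average_le_card_part hU
    have h2 : Ne * #P.parts ≤ Fintype.card V := by
      calc Ne * #P.parts ≤ Ne * B := Nat.mul_le_mul_left _ hP₃
        _ ≤ (Ne + 1) * (B + 1) := Nat.mul_le_mul (Nat.le_succ _) (Nat.le_succ _)
        _ ≤ Fintype.card V := le_trans (le_max_right 1 _) (le_trans (le_max_right l _) hn)
    have h3 : Ne ≤ Fintype.card V / #P.parts := (Nat.le_div_iff_mul_le hparts_pos).mpr h2
    calc Ne ≤ Fintype.card V / #P.parts := h3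
      _ = #(Finset.univ : Finset V) / #P.parts := by rw [Finset.card_univ]
      _ ≤ #U := h1
  -- the reduced graph has no clique of size r + 1
  have hclique : ∀ S : Finset V, ¬ (G.regularityReduced P εr δ).IsNClique (r + 1) S := by
    intro S hS
    have hcard : Fintype.card (↥S) = r + 1 := by rw [Fintype.card_coe, hS.card_eq]
    let e : Fin (r + 1) ≃ ↥S := (Fintype.equivFinOfCardEq hcard).symm
    set x : Fin (r + 1) → V := fun i => (e i : V) with hx_def
    have hxinj : Function.Injective x := fun i j h => e.injective (Subtype.coe_injective h)
    have hxmem : ∀ i, x i ∈ S := fun i => (e i).2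
    have hxadj : ∀ i j, i ≠ j → (G.regularityReduced P εr δ).Adj (x i) (x j) := fun i j hij =>
      hS.isClique (Finset.mem_coe.mpr (hxmem i)) (Finset.mem_coe.mpr (hxmem j))
        (fun h => hij (hxinj h))
    have hexU : ∀ i, ∃ U, U ∈ P.parts ∧ x i ∈ U := by
      intro i
      obtain ⟨U, h1, h2⟩ := P.exists_mem (Finset.mem_univ (x i))
      exact ⟨U, h1, h2⟩
    choose Q hQp hQx using hexU
    have hpair : ∀ i j, i ≠ j → Q i ≠ Q j ∧ G.IsUniform εr (Q i) (Q j) ∧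
        δ ≤ (G.edgeDensity (Q i) (Q j) : ℝ) := by
      intro i j hij
      obtain ⟨-, U, hU, W, hW, hxiU, hxjW, hUW, hunif, hdens⟩ := hxadj i j hij
      obtain rfl : U = Q i :=
        P.disjoint.elim hU (hQp i) (Finset.not_disjoint_iff.mpr ⟨x i, hxiU, hQx i⟩)
      obtain rfl : W = Q j :=
        P.disjoint.elim hW (hQp j) (Finset.not_disjoint_iff.mpr ⟨x j, hxjW, hQx j⟩)
      exact ⟨hUW, hunif, hdens⟩
    obtain ⟨T, hTsub, hTcard, hTadj⟩ := hemb G Q (fun i => hpartsize _ (hQp i))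
      (fun i j hij => ((hpair i j hij).2.1).mono (min_le_right _ _))
      (fun i j hij => (hpair i j hij).2.2)
    have hcardT : ∀ i : Fin (r + 1), Fintype.card α = Fintype.card (↥(T i)) := by
      intro i
      rw [Fintype.card_coe, hTcard i]
    let eqv : ∀ i : Fin (r + 1), α ≃ ↥(T i) := fun i => Fintype.equivOfCardEq (hcardT i)
    let φ : α → V := fun a => ((eqv (Co a)) a : V)
    have hφmem : ∀ a, φ a ∈ T (Co a) := fun a => ((eqv (Co a)) a).2
    have hφadj : ∀ a b, F.Adj a b → G.Adj (φ a) (φ b) := by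
      intro a b hab
      exact hTadj (Co a) (Co b) (Co.valid hab) _ (hφmem a) _ (hφmem b)
    have hφinj : Function.Injective φ := by
      intro a b h
      rcases eq_or_ne (Co a) (Co b) with hc | hc
      · simp only [φ] at h
        rw [hc] at h
        exact (eqv (Co b)).injective (Subtype.coe_injective h)
      · have hadj2 := hTadj (Co a) (Co b) hc _ (hφmem a) _ (hφmem b)
        rw [h] at hadj2
        exact absurd hadj2 (G.loopless.irrefl _)
    exact hF ⟨φ, hφinj, fun a b hab => hφadj a b hab⟩
  have hG'free : ¬ ContainsCopy (completeGraph (Fin (r + 1))) (G.regularityReduced P εr δ) := by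
    rintro ⟨g, hginj, hgadj⟩
    refine hclique (Finset.univ.map ⟨g, hginj⟩) ?_
    constructor
    · intro u hu w hw huw
      simp only [Finset.coe_map, Set.mem_image, Finset.mem_coe, Finset.coe_univ,
        Set.image_univ, Set.mem_range] at hu hw
      obtain ⟨a, rfl⟩ := hu
      obtain ⟨b, rfl⟩ := hw
      exact hgadj (fun h : a = b => huw (congrArg g h))
    · rw [Finset.card_map, Finset.card_univ, Fintype.card_fin]
  have hsubF : (G.regularityReduced P εr δ).edgeFinset ⊆ G.edgeFinset := SimpleGraph.edgeFinset_mono hG'le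
  have hcount : ((#G.edgeFinset : ℝ) - #(G.regularityReduced P εr δ).edgeFinset) ≤ η' * (Fintype.card V : ℝ) ^ 2 := by
    have e1 : (Finset.univ.filter fun xy : V × V =>
          G.Adj xy.1 xy.2 ∧ ¬ (G.regularityReduced P εr δ).Adj xy.1 xy.2)
        = (Finset.univ.filter fun xy : V × V => G.Adj xy.1 xy.2) \
          (Finset.univ.filter fun xy : V × V => (G.regularityReduced P εr δ).Adj xy.1 xy.2) :=
      Finset.filter_and_not _ _ _
    have e2 : (Finset.univ.filter fun xy : V × V => (G.regularityReduced P εr δ).Adj xy.1 xy.2) ⊆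
        (Finset.univ.filter fun xy : V × V => G.Adj xy.1 xy.2) :=
      Finset.monotone_filter_right _ fun xy _ hxy => hG'le hxy
    have e3 : 2 * ((#G.edgeFinset : ℝ) - #(G.regularityReduced P εr δ).edgeFinset)
        = (#(Finset.univ.filter fun xy : V × V =>
            G.Adj xy.1 xy.2 ∧ ¬ (G.regularityReduced P εr δ).Adj xy.1 xy.2) : ℝ) := by
      rw [e1, Finset.cast_card_sdiff e2]
      have t1 : 2 * #G.edgeFinset
          = #(Finset.univ.filter fun xy : V × V => G.Adj xy.1 xy.2) :=
        SimpleGraph.two_mul_card_edgeFinset (G := G)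
      have t2 : 2 * #(G.regularityReduced P εr δ).edgeFinset
          = #(Finset.univ.filter fun xy : V × V => (G.regularityReduced P εr δ).Adj xy.1 xy.2) :=
        SimpleGraph.two_mul_card_edgeFinset (G := G.regularityReduced P εr δ)
      push_cast [← t1, ← t2]
      ring
    have hA : (#((P.nonUniforms G εr).biUnion fun UV : Finset V × Finset V =>
        UV.1 ×ˢ UV.2) : ℝ) < 4 * εr * (Fintype.card V : ℝ) ^ 2 := by
      have := hP₁.sum_nonUniforms_lt (G := G) Finset.univ_nonempty hεr0 hP₄
      rwa [Finset.card_univ] at this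
    have hB2 : (#(P.parts.biUnion Finset.offDiag) : ℝ) ≤ δ / 2 * (Fintype.card V : ℝ) ^ 2 := by
      have hlδ : (4 : ℝ) / δ ≤ #P.parts := by
        have c1 : ((4:ℝ) / δ) ≤ ⌈(4:ℝ) / δ⌉₊ := Nat.le_ceil _
        have c2 : (⌈(4:ℝ) / δ⌉₊ : ℝ) ≤ l := by exact_mod_cast le_max_left _ 1
        have c3 : (l : ℝ) ≤ #P.parts := by exact_mod_cast hP₂
        linarith
      have := Finpartition.IsEquipartition.card_biUnion_offDiag_le hδ0 hP₁ hlδ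
      rwa [Finset.card_univ] at this
    have hC : (#((P.sparsePairs G δ).biUnion fun UV : Finset V × Finset V =>
        G.interedges UV.1 UV.2) : ℝ) ≤ 4 * δ * (Fintype.card V : ℝ) ^ 2 := by
      have := hP₁.card_interedges_sparsePairs_le (G := G) hδ0.le
      rwa [Finset.card_univ] at this
    have hsubU := EFRAux.unreduced_subset G P εr δ
    have hcard1 : (#(Finset.univ.filter fun xy : V × V =>
          G.Adj xy.1 xy.2 ∧ ¬ (G.regularityReduced P εr δ).Adj xy.1 xy.2) : ℝ)
        ≤ (#((P.nonUniforms G εr).biUnion fun UV : Finset V × Finset V =>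
              UV.1 ×ˢ UV.2) : ℝ)
          + #(P.parts.biUnion Finset.offDiag)
          + #((P.sparsePairs G δ).biUnion fun UV : Finset V × Finset V =>
              G.interedges UV.1 UV.2) := by
      have s1 := Finset.card_le_card hsubU
      have s2 := Finset.card_union_le
        (((P.nonUniforms G εr).biUnion fun UV : Finset V × Finset V => UV.1 ×ˢ UV.2) ∪
          P.parts.biUnion Finset.offDiag)
        ((P.sparsePairs G δ).biUnion fun UV : Finset V × Finset V => G.interedges UV.1 UV.2)
      have s3 := Finset.card_union_le
        ((P.nonUniforms G εr).biUnion fun UV : Finset V × Finset V => UV.1 ×ˢ UV.2)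
        (P.parts.biUnion Finset.offDiag)
      have := le_trans s1 (le_trans s2 (Nat.add_le_add_right s3 _))
      exact_mod_cast this
    have hεr_le : εr ≤ η' / 16 := min_le_left _ _
    have hn2 : (0:ℝ) ≤ (Fintype.card V : ℝ) ^ 2 := sq_nonneg _
    have total : 2 * ((#G.edgeFinset : ℝ) - #(G.regularityReduced P εr δ).edgeFinset)
        ≤ 2 * (η' * (Fintype.card V : ℝ) ^ 2) := by
      rw [e3]
      have b1 : 4 * εr * (Fintype.card V : ℝ) ^ 2 ≤ 4 * (η' / 16) * (Fintype.card V : ℝ) ^ 2 := by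
        have := mul_le_mul_of_nonneg_right (mul_le_mul_of_nonneg_left hεr_le
          (by norm_num : (0:ℝ) ≤ 4)) hn2
        linarith [this]
      calc (#(Finset.univ.filter fun xy : V × V =>
            G.Adj xy.1 xy.2 ∧ ¬ (G.regularityReduced P εr δ).Adj xy.1 xy.2) : ℝ) ≤ _ := hcard1
        _ ≤ 4 * εr * (Fintype.card V : ℝ) ^ 2 + δ / 2 * (Fintype.card V : ℝ) ^ 2
            + 4 * δ * (Fintype.card V : ℝ) ^ 2 := by
            have := hA.le
            linarith
        _ ≤ 2 * (η' * (Fintype.card V : ℝ) ^ 2) := by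
            rw [hδ_def]
            nlinarith [hn2, hη'0.le]
    linarith
  refine ⟨G.regularityReduced P εr δ, hG'le, ?_, hG'free⟩
  have hset : G.edgeSet \ (G.regularityReduced P εr δ).edgeSet = ↑(G.edgeFinset \ (G.regularityReduced P εr δ).edgeFinset) := by
    rw [Finset.coe_sdiff, SimpleGraph.coe_edgeFinset, SimpleGraph.coe_edgeFinset]
  rw [hset, Set.ncard_coe_finset]
  have : ((#(G.edgeFinset \ (G.regularityReduced P εr δ).edgeFinset) : ℕ) : ℝ)
      = (#G.edgeFinset : ℝ) - #(G.regularityReduced P εr δ).edgeFinset := Finset.cast_card_sdiff hsubF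
  rw [this]
  calc (#G.edgeFinset : ℝ) - #(G.regularityReduced P εr δ).edgeFinset ≤ η' * (Fintype.card V : ℝ) ^ 2 := hcount
    _ ≤ η * (Fintype.card V : ℝ) ^ 2 :=
      mul_le_mul_of_nonneg_right hη'η (sq_nonneg _)
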